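/- The order of the subgroup H = {(ξ,η) ∈ μ_d × μ_e | ξ^a η^r = 1 and ξ^b η^s = 1} of μ_d × μ_e, where gcd(d,a,b) = gcd(e,r,s) = 1, equals gcd(d, e, a·s − b·r). -/

import Mathlib

open Complex

private lemma bezout3 (g : ℕ) (a b : ℤ) (h : Int.gcd (Int.gcd (g:ℤ) a) b = 1) :
    ∃ u v w : ℤ, a * u + b * v + (g:ℤ) * w = 1 := by
  have h1 : ((Int.gcd ((Int.gcd (g:ℤ) a : ℕ) : ℤ) b : ℕ) : ℤ)
      = ((Int.gcd (g:ℤ) a : ℕ) : ℤ) * Int.gcdA _ b + b * Int.gcdB _ b :=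
    Int.gcd_eq_gcd_ab _ b
  have h2 : ((Int.gcd (g:ℤ) a : ℕ) : ℤ) = (g:ℤ) * Int.gcdA (g:ℤ) a + a * Int.gcdB (g:ℤ) a :=
    Int.gcd_eq_gcd_ab _ _
  rw [h] at h1
  refine ⟨Int.gcdB (g:ℤ) a * Int.gcdA ((Int.gcd (g:ℤ) a : ℕ) : ℤ) b,
      Int.gcdB ((Int.gcd (g:ℤ) a : ℕ) : ℤ) b,
      Int.gcdA (g:ℤ) a * Int.gcdA ((Int.gcd (g:ℤ) a : ℕ) : ℤ) b, ?_⟩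
  rw [Nat.cast_one] at h1
  linear_combination -h1 - Int.gcdA ((Int.gcd (g:ℤ) a : ℕ) : ℤ) b * h2

private lemma pow_natAbs_eq_one' {ξ : ℂ} {k : ℤ} (h : ξ ^ k = 1) : ξ ^ k.natAbs = 1 := by
  rcases Int.natAbs_eq k with hk | hk
  · rw [← zpow_natCast, ← hk, h]
  · rw [← zpow_natCast]
    rw [hk, zpow_neg, inv_eq_one] at h
    exact h

/-- The order of the subgroup `H = {(ξ,η) ∈ μ_d × μ_e | ξ^a η^r = 1, ξ^b η^s = 1}`
equals `gcd(d, e, a·s − b·r)`, provided `gcd(d,a,b) = gcd(e,r,s) = 1`. -/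
theorem order_of_H (d e : ℕ) (hd : 0 < d) (he : 0 < e) (a b r s : ℤ)
    (hdab : Int.gcd (Int.gcd (d : ℤ) a) b = 1)
    (hers : Int.gcd (Int.gcd (e : ℤ) r) s = 1) :
    Nat.card {p : ℂ × ℂ // p.1 ^ d = 1 ∧ p.2 ^ e = 1 ∧
      p.1 ^ a * p.2 ^ r = 1 ∧ p.1 ^ b * p.2 ^ s = 1} =
    Int.gcd (Int.gcd (d : ℤ) (e : ℤ)) (a * s - b * r) := by
  set Δ : ℤ := a * s - b * r with hΔdef
  set g : ℕ := Nat.gcd (Nat.gcd d e) Δ.natAbs with hgdef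
  have hgoal : Int.gcd (Int.gcd (d:ℤ) (e:ℤ)) Δ = g := by
    simp [Int.gcd, hgdef]
  rw [hgoal]
  -- basic divisibilities
  have hgd : g ∣ d := (Nat.gcd_dvd_left _ _).trans (Nat.gcd_dvd_left d e)
  have hge : g ∣ e := (Nat.gcd_dvd_left _ _).trans (Nat.gcd_dvd_right d e)
  have hgΔ : (g:ℤ) ∣ Δ :=
    (Int.natCast_dvd_natCast.mpr (Nat.gcd_dvd_right _ _)).trans (Int.natAbs_dvd.mpr dvd_rfl)
  have hg0 : 0 < g := Nat.gcd_pos_of_pos_left _ (Nat.gcd_pos_of_pos_left _ hd)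
  haveI : NeZero g := ⟨hg0.ne'⟩
  -- gcd(g,a,b) = 1, Bezout
  have hdab' : Nat.gcd (Nat.gcd d a.natAbs) b.natAbs = 1 := by
    simpa [Int.gcd] using hdab
  have hers' : Nat.gcd (Nat.gcd e r.natAbs) s.natAbs = 1 := by
    simpa [Int.gcd] using hers
  have hgab : Int.gcd (Int.gcd (g:ℤ) a) b = 1 := by
    have hdvd : Nat.gcd (Nat.gcd g a.natAbs) b.natAbs ∣ Nat.gcd (Nat.gcd d a.natAbs) b.natAbs :=
      Nat.dvd_gcd
        ((Nat.gcd_dvd_left _ _).trans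
          (Nat.dvd_gcd ((Nat.gcd_dvd_left g _).trans hgd) (Nat.gcd_dvd_right g _)))
        (Nat.gcd_dvd_right _ _)
    rw [hdab'] at hdvd
    simpa [Int.gcd] using Nat.dvd_one.mp hdvd
  obtain ⟨u, v, w, huvw⟩ := bezout3 g a b hgab
  set m : ℤ := -(u * r + v * s) with hmdef
  -- key divisibilities
  have key1 : (g:ℤ) ∣ a * m + r := by
    have hid : a * m + r = (g:ℤ) * (w * r) + (-v) * Δ := by
      rw [hmdef, hΔdef]; linear_combination (-r) * huvw
    rw [hid]
    exact dvd_add (Dvd.intro _ rfl) (hgΔ.mul_left _)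
  have key2 : (g:ℤ) ∣ b * m + s := by
    have hid : b * m + s = (g:ℤ) * (w * s) + u * Δ := by
      rw [hmdef, hΔdef]; linear_combination (-s) * huvw
    rw [hid]
    exact dvd_add (Dvd.intro _ rfl) (hgΔ.mul_left _)
  -- the primitive root
  set ζ : ℂ := Complex.exp (2 * Real.pi * Complex.I / g) with hζdef
  have hζ : IsPrimitiveRoot ζ g := Complex.isPrimitiveRoot_exp g hg0.ne'
  have hζ0 : ζ ≠ 0 := hζ.ne_zero hg0.ne'
  have hzone : ∀ k : ℤ, (g:ℤ) ∣ k → ζ ^ k = 1 := fun k hk =>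
    (hζ.zpow_eq_one_iff_dvd k).mpr hk
  have hzeq : ∀ k l : ℤ, (g:ℤ) ∣ k - l → ζ ^ k = ζ ^ l := by
    intro k l hkl
    obtain ⟨t, ht⟩ := hkl
    have hk : k = l + (g:ℤ) * t := by linarith
    rw [hk, zpow_add₀ hζ0, zpow_mul, hζ.zpow_eq_one, one_zpow, mul_one]
  have hpz : ∀ k l : ℤ, (ζ ^ k) ^ l = ζ ^ (k * l) := fun k l => (zpow_mul ζ k l).symm
  have hpn : ∀ (k : ℤ) (n : ℕ), (ζ ^ k) ^ n = ζ ^ (k * n) := fun k n => by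
    rw [← zpow_natCast (ζ ^ k) n, hpz]
  have hgd' : (g:ℤ) ∣ (d:ℤ) := Int.natCast_dvd_natCast.mpr hgd
  have hge' : (g:ℤ) ∣ (e:ℤ) := Int.natCast_dvd_natCast.mpr hge
  -- the bijection
  have key : Nat.card (ZMod g) = Nat.card {p : ℂ × ℂ // p.1 ^ d = 1 ∧ p.2 ^ e = 1 ∧
      p.1 ^ a * p.2 ^ r = 1 ∧ p.1 ^ b * p.2 ^ s = 1} := by
    apply Nat.card_eq_of_bijective (fun y =>
      ⟨(ζ ^ (m * (y.val : ℤ)), ζ ^ ((y.val : ℤ))), by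
        refine ⟨?_, ?_, ?_, ?_⟩
        · rw [hpn]; exact hzone _ (Dvd.dvd.mul_left hgd' _)
        · rw [hpn]; exact hzone _ (Dvd.dvd.mul_left hge' _)
        · rw [hpz, hpz, ← zpow_add₀ hζ0]
          refine hzone _ ?_
          have hid : m * (y.val:ℤ) * a + (y.val:ℤ) * r = (a * m + r) * (y.val:ℤ) := by ring
          rw [hid]; exact key1.mul_right _
        · rw [hpz, hpz, ← zpow_add₀ hζ0]
          refine hzone _ ?_
          have hid : m * (y.val:ℤ) * b + (y.val:ℤ) * s = (b * m + s) * (y.val:ℤ) := by ring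
          rw [hid]; exact key2.mul_right _⟩)
    constructor
    · intro y1 y2 hy
      have h2 : ζ ^ ((y1.val : ℤ)) = ζ ^ ((y2.val : ℤ)) := congrArg (fun p => p.1.2) hy
      rw [zpow_natCast, zpow_natCast] at h2
      exact ZMod.val_injective g (hζ.pow_inj y1.val_lt y2.val_lt h2)
    · rintro ⟨⟨ξ, η⟩, h1, h2, h3, h4⟩
      have hξ0 : ξ ≠ 0 := fun h => by simp [h, zero_pow hd.ne'] at h1
      have hη0 : η ≠ 0 := fun h => by simp [h, zero_pow he.ne'] at h2
      have e3 : ξ ^ a = (η ^ r)⁻¹ := eq_inv_of_mul_eq_one_left h3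
      have e4 : ξ ^ b = (η ^ s)⁻¹ := eq_inv_of_mul_eq_one_left h4
      have e3' : η ^ r = (ξ ^ a)⁻¹ := by rw [e3, inv_inv]
      have e4' : η ^ s = (ξ ^ b)⁻¹ := by rw [e4, inv_inv]
      have h1z : ξ ^ (d:ℤ) = 1 := by rw [zpow_natCast]; exact h1
      have h2z : η ^ (e:ℤ) = 1 := by rw [zpow_natCast]; exact h2
      -- powers killing ξ and η
      have hξΔ : ξ ^ Δ = 1 := by
        have hid : ξ ^ Δ = (ξ ^ a) ^ s * ((ξ ^ b) ^ r)⁻¹ := by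
          rw [← zpow_mul, ← zpow_mul, ← zpow_neg, ← zpow_add₀ hξ0, hΔdef]
          ring_nf
        rw [hid, e3, e4, inv_zpow, inv_zpow, inv_inv, ← zpow_mul, ← zpow_mul,
          mul_comm s r, inv_mul_cancel₀ (zpow_ne_zero _ hη0)]
      have hηΔ : η ^ Δ = 1 := by
        have hid : η ^ Δ = (η ^ s) ^ a * ((η ^ r) ^ b)⁻¹ := by
          rw [← zpow_mul, ← zpow_mul, ← zpow_neg, ← zpow_add₀ hη0, hΔdef]
          ring_nf
        rw [hid, e3', e4', inv_zpow, inv_zpow, inv_inv, ← zpow_mul, ← zpow_mul,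
          mul_comm b a, inv_mul_cancel₀ (zpow_ne_zero _ hξ0)]
      have hae : ξ ^ (a * (e:ℤ)) = 1 := by
        rw [zpow_mul, e3, inv_zpow, ← zpow_mul, mul_comm r (e:ℤ), zpow_mul, h2z,
          one_zpow, inv_one]
      have hbe : ξ ^ (b * (e:ℤ)) = 1 := by
        rw [zpow_mul, e4, inv_zpow, ← zpow_mul, mul_comm s (e:ℤ), zpow_mul, h2z,
          one_zpow, inv_one]
      have hrd : η ^ (r * (d:ℤ)) = 1 := by
        rw [zpow_mul, e3', inv_zpow, ← zpow_mul, mul_comm a (d:ℤ), zpow_mul, h1z,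
          one_zpow, inv_one]
      have hsd : η ^ (s * (d:ℤ)) = 1 := by
        rw [zpow_mul, e4', inv_zpow, ← zpow_mul, mul_comm b (d:ℤ), zpow_mul, h1z,
          one_zpow, inv_one]
      -- orderOf ξ divides g
      have hξg : ξ ^ g = 1 := by
        have hnd : orderOf ξ ∣ d := orderOf_dvd_of_pow_eq_one h1
        have hnΔ : orderOf ξ ∣ Δ.natAbs := orderOf_dvd_of_pow_eq_one (pow_natAbs_eq_one' hξΔ)
        have hnae : orderOf ξ ∣ a.natAbs * e := by
          have hh := orderOf_dvd_of_pow_eq_one (pow_natAbs_eq_one' hae)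
          rwa [Int.natAbs_mul, Int.natAbs_natCast] at hh
        have hnbe : orderOf ξ ∣ b.natAbs * e := by
          have hh := orderOf_dvd_of_pow_eq_one (pow_natAbs_eq_one' hbe)
          rwa [Int.natAbs_mul, Int.natAbs_natCast] at hh
        have hco : Nat.Coprime (orderOf ξ) (Nat.gcd a.natAbs b.natAbs) := by
          have hdco : Nat.Coprime d (Nat.gcd a.natAbs b.natAbs) := by
            rw [Nat.Coprime, ← Nat.gcd_assoc]; exact hdab'
          exact Nat.Coprime.coprime_dvd_left hnd hdco
        have hne : orderOf ξ ∣ e := by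
          have hgc : orderOf ξ ∣ e * Nat.gcd a.natAbs b.natAbs := by
            have hh := Nat.dvd_gcd hnae hnbe
            rwa [Nat.gcd_mul_right, mul_comm] at hh
          exact Nat.Coprime.dvd_of_dvd_mul_right hco hgc
        exact orderOf_dvd_iff_pow_eq_one.mp (Nat.dvd_gcd (Nat.dvd_gcd hnd hne) hnΔ)
      -- orderOf η divides g
      have hηg : η ^ g = 1 := by
        have hnd : orderOf η ∣ e := orderOf_dvd_of_pow_eq_one h2
        have hnΔ : orderOf η ∣ Δ.natAbs := orderOf_dvd_of_pow_eq_one (pow_natAbs_eq_one' hηΔ)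
        have hnae : orderOf η ∣ r.natAbs * d := by
          have hh := orderOf_dvd_of_pow_eq_one (pow_natAbs_eq_one' hrd)
          rwa [Int.natAbs_mul, Int.natAbs_natCast] at hh
        have hnbe : orderOf η ∣ s.natAbs * d := by
          have hh := orderOf_dvd_of_pow_eq_one (pow_natAbs_eq_one' hsd)
          rwa [Int.natAbs_mul, Int.natAbs_natCast] at hh
        have hco : Nat.Coprime (orderOf η) (Nat.gcd r.natAbs s.natAbs) := by
          have hdco : Nat.Coprime e (Nat.gcd r.natAbs s.natAbs) := by
            rw [Nat.Coprime, ← Nat.gcd_assoc]; exact hers'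
          exact Nat.Coprime.coprime_dvd_left hnd hdco
        have hne : orderOf η ∣ d := by
          have hgc : orderOf η ∣ d * Nat.gcd r.natAbs s.natAbs := by
            have hh := Nat.dvd_gcd hnae hnbe
            rwa [Nat.gcd_mul_right, mul_comm] at hh
          exact Nat.Coprime.dvd_of_dvd_mul_right hco hgc
        exact orderOf_dvd_iff_pow_eq_one.mp (Nat.dvd_gcd (Nat.dvd_gcd hne hnd) hnΔ)
      -- express ξ and η as powers of ζ
      obtain ⟨xi, hxil, hxi⟩ := hζ.eq_pow_of_pow_eq_one hξg
      obtain ⟨yi, hyil, hyi⟩ := hζ.eq_pow_of_pow_eq_one hηg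
      have hxiz : ζ ^ ((xi:ℤ)) = ξ := by rw [zpow_natCast]; exact hxi
      have hyiz : ζ ^ ((yi:ℤ)) = η := by rw [zpow_natCast]; exact hyi
      have hP : (g:ℤ) ∣ a * (xi:ℤ) + r * (yi:ℤ) := by
        refine (hζ.zpow_eq_one_iff_dvd _).mp ?_
        have hid : ζ ^ (a * (xi:ℤ) + r * (yi:ℤ)) = (ζ ^ ((xi:ℤ))) ^ a * (ζ ^ ((yi:ℤ))) ^ r := by
          rw [hpz, hpz, ← zpow_add₀ hζ0, mul_comm (xi:ℤ) a, mul_comm (yi:ℤ) r]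
        rw [hid, hxiz, hyiz]; exact h3
      have hQ : (g:ℤ) ∣ b * (xi:ℤ) + s * (yi:ℤ) := by
        refine (hζ.zpow_eq_one_iff_dvd _).mp ?_
        have hid : ζ ^ (b * (xi:ℤ) + s * (yi:ℤ)) = (ζ ^ ((xi:ℤ))) ^ b * (ζ ^ ((yi:ℤ))) ^ s := by
          rw [hpz, hpz, ← zpow_add₀ hζ0, mul_comm (xi:ℤ) b, mul_comm (yi:ℤ) s]
        rw [hid, hxiz, hyiz]; exact h4
      refine ⟨(yi : ZMod g), ?_⟩
      have hval : ((yi : ZMod g)).val = yi % g := ZMod.val_natCast g yi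
      have hvd : (g:ℤ) ∣ (((yi : ZMod g)).val : ℤ) - (yi:ℤ) := by
        rw [hval]
        refine ⟨-((yi:ℤ) / (g:ℤ)), ?_⟩
        rw [Int.natCast_mod]
        rw [Int.emod_def]; ring
      have comp2 : ζ ^ ((((yi : ZMod g)).val : ℤ)) = η := by
        rw [hzeq _ _ hvd]; exact hyiz
      have comp1 : ζ ^ (m * (((yi : ZMod g)).val : ℤ)) = ξ := by
        have hd1 : (g:ℤ) ∣ m * (((yi : ZMod g)).val : ℤ) - m * (yi:ℤ) := by
          have := hvd.mul_left m
          rwa [mul_sub] at this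
        have hd2 : (g:ℤ) ∣ m * (yi:ℤ) - (xi:ℤ) := by
          have hid : m * (yi:ℤ) - (xi:ℤ) =
              (-u) * (a * (xi:ℤ) + r * (yi:ℤ)) + (-v) * (b * (xi:ℤ) + s * (yi:ℤ))
                + (g:ℤ) * (-(w * (xi:ℤ))) := by
            rw [hmdef]; linear_combination ((xi:ℤ)) * huvw
          rw [hid]
          exact dvd_add (dvd_add (hP.mul_left _) (hQ.mul_left _)) (Dvd.intro _ rfl)
        have : (g:ℤ) ∣ m * (((yi : ZMod g)).val : ℤ) - (xi:ℤ) := by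
          have := dvd_add hd1 hd2
          rwa [sub_add_sub_cancel] at this
        rw [hzeq _ _ this]; exact hxiz
      exact Subtype.ext (Prod.ext comp1 comp2)
  rw [← key, Nat.card_zmod]
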